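/- Let G be a group in which the map x ↦ x^m is injective for every integer m all of whose prime divisors lie outside π (i.e., G is a U_π-group). Let A be a normal abelian subgroup of G that is maximal among normal abelian subgroups containing the derived subgroup G'. If x ∈ G and x^m ∈ A for some m ∈ π′ (all prime divisors of m outside π), then x ∈ A. In particular G/A has no nontrivial elements of order m for m ∈ π′. -/

import Mathlib

open scoped commutatorElement

/-- Let `G` be a `U_π`-group and `A` a normal abelian subgroup of `G` containing the
derived subgroup, maximal among such. If `x ^ m ∈ A` for some `m` all of whose prime
divisors lie outside `π`, then `x ∈ A`. -/
theorem stmt1 {G : Type*} [Group G] (π : Set ℕ)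
    (hU : ∀ m : ℕ, 0 < m → (∀ p : ℕ, p.Prime → p ∣ m → p ∉ π) →
      Function.Injective (fun x : G => x ^ m))
    (A : Subgroup G) [A.Normal] (hA : IsMulCommutative A) (hGA : commutator G ≤ A)
    (hmax : ∀ B : Subgroup G, B.Normal → IsMulCommutative B → commutator G ≤ B →
      A ≤ B → B = A)
    (x : G) (m : ℕ) (hm : 0 < m) (hmπ : ∀ p : ℕ, p.Prime → p ∣ m → p ∉ π)
    (hxm : x ^ m ∈ A) : x ∈ A := by
  -- First, x commutes with every element of A.
  have hcomm : ∀ a ∈ A, a * x = x * a := by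
    intro a ha
    have h1 : (a * x * a⁻¹) ^ m = a * x ^ m * a⁻¹ := conj_pow
    have h2 : a * x ^ m * a⁻¹ = x ^ m := by
      have := hA.is_comm.comm ⟨a, ha⟩ ⟨x ^ m, hxm⟩
      have h3 : a * x ^ m = x ^ m * a := congrArg Subtype.val this
      rw [h3, mul_assoc, mul_inv_cancel, mul_one]
    have h4 : a * x * a⁻¹ = x := hU m hm hmπ (show (a*x*a⁻¹)^m = x^m by rw [h1, h2])
    calc a * x = (a * x * a⁻¹) * a := by group
    _ = x * a := by rw [h4]
  -- The subgroup generated by A and x.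
  set B := A ⊔ Subgroup.closure {x} with hB
  have hxB : x ∈ B := Subgroup.mem_sup_right (Subgroup.mem_closure_singleton.mpr ⟨1, zpow_one x⟩)
  have hAB : A ≤ B := le_sup_left
  have hBgen : B = Subgroup.closure (↑A ∪ {x}) := by
    rw [Subgroup.closure_union, Subgroup.closure_eq]
  -- B contains the commutator subgroup, hence is normal.
  have hGB : commutator G ≤ B := hGA.trans hAB
  have hBn : B.Normal := by
    constructor
    intro g hg n
    have hc : ⁅n, g⁆ ∈ B := hGB (Subgroup.commutator_mem_commutator (Subgroup.mem_top n)
      (Subgroup.mem_top g))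
    have : n * g * n⁻¹ = ⁅n, g⁆ * g := by group
    rw [this]
    exact B.mul_mem hc hg
  -- B is commutative: all generators commute pairwise.
  have hBcomm : IsMulCommutative B := by
    constructor; constructor
    rintro ⟨b₁, hb₁⟩ ⟨b₂, hb₂⟩
    have key : ∀ b₁ ∈ B, ∀ b₂ ∈ B, b₁ * b₂ = b₂ * b₁ := by
      have hS : ∀ s ∈ (↑A ∪ {x} : Set G), ∀ t ∈ (↑A ∪ {x} : Set G), s * t = t * s := by
        rintro s (hs | rfl) t (ht | rfl)
        · exact congrArg Subtype.val (hA.is_comm.comm ⟨s, hs⟩ ⟨t, ht⟩)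
        · exact hcomm s hs
        · exact (hcomm t ht).symm
        · rfl
      intro b₁ hb₁ b₂ hb₂
      rw [hBgen] at hb₁ hb₂
      induction hb₁ using Subgroup.closure_induction generalizing b₂ with
      | mem s hs =>
        induction hb₂ using Subgroup.closure_induction with
        | mem t ht => exact hS s hs t ht
        | one => simp
        | mul u v _ _ hu hv => rw [← mul_assoc, hu, mul_assoc, hv, mul_assoc]
        | inv u _ hu => exact (Commute.inv_right (hu : Commute s u))
      | one => simp
      | mul u v _ _ hu hv =>
        exact Commute.mul_left (hu b₂ hb₂ : Commute u b₂) (hv b₂ hb₂)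
      | inv u _ hu => exact Commute.inv_left (hu b₂ hb₂ : Commute u b₂)
    exact Subtype.ext (key b₁ hb₁ b₂ hb₂)
  have := hmax B hBn hBcomm hGB hAB
  rw [← this]
  exact hxB
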